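/- Let P• be a bounded minimal complex of finitely generated projective modules over a finite-dimensional k-algebra A. Then every null-homotopic chain endomorphism f• of P• lies in the Jacobson radical of the endomorphism algebra End_{C(A)}(P•); in particular every null-homotopic chain endomorphism of P• is nilpotent. -/

import Mathlib

set_option synthInstance.maxHeartbeats 800000
set_option maxHeartbeats 1600000

open CategoryTheory

/-- The radical of a module `M` over `A`: the submodule `rad(A)·M`. -/
def modRad (A M : Type*) [Ring A] [AddCommGroup M] [Module A M] : Submodule A M :=
  Submodule.span A {y | ∃ a ∈ Ideal.jacobson (⊥ : Ideal A), ∃ x : M, a • x = y}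

section AuxRing

variable {R : Type*} [Ring R]

/-- For `a` in the Jacobson radical, `1 - x * a` is left invertible. -/
lemma aux_left_inv {a : R} (ha : a ∈ Ideal.jacobson (⊥ : Ideal R)) (x : R) :
    ∃ u : R, u * (1 - x * a) = 1 := by
  obtain ⟨z, hz⟩ := Ideal.mem_jacobson_iff.mp ha (-x)
  rw [Submodule.mem_bot, sub_eq_zero] at hz
  refine ⟨z, ?_⟩
  rw [show z * (1 - x * a) = z * -x * a + z by noncomm_ring, hz]

/-- The Jacobson radical (of `⊥`) is closed under right multiplication. -/
lemma aux_jac_mul_right {a : R} (ha : a ∈ Ideal.jacobson (⊥ : Ideal R)) (r : R) :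
    a * r ∈ Ideal.jacobson (⊥ : Ideal R) := by
  rw [Ideal.mem_jacobson_iff]
  intro y
  obtain ⟨u, hu⟩ := Ideal.mem_jacobson_iff.mp ha (r * y)
  rw [Submodule.mem_bot, sub_eq_zero] at hu
  refine ⟨1 - y * a * u * r, ?_⟩
  rw [Submodule.mem_bot]
  have expand : (1 - y * a * u * r) * y * (a * r) + (1 - y * a * u * r) - 1
      = y * a * r - y * a * (u * (r * y) * a + u) * r := by noncomm_ring
  rw [expand, hu]
  noncomm_ring

end AuxRing

section AuxModule

variable {R : Type*} [Ring R] {M : Type*} [AddCommGroup M] [Module R M]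

/-- The operation `N ↦ rad(R)·N` on submodules. -/
def radOp (N : Submodule R M) : Submodule R M :=
  Submodule.span R {y | ∃ a ∈ Ideal.jacobson (⊥ : Ideal R), ∃ x ∈ N, a • x = y}

lemma modRad_eq_radOp : modRad R M = radOp (⊤ : Submodule R M) := by
  unfold modRad radOp
  congr 1
  ext y
  simp

lemma radOp_le (N : Submodule R M) : radOp N ≤ N := by
  refine Submodule.span_le.mpr ?_
  rintro _ ⟨a, _, x, hx, rfl⟩
  exact N.smul_mem a hx

lemma radOp_mono {N N' : Submodule R M} (h : N ≤ N') : radOp N ≤ radOp N' := by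
  refine Submodule.span_mono ?_
  rintro _ ⟨a, ha, x, hx, rfl⟩
  exact ⟨a, ha, x, h hx, rfl⟩

lemma map_radOp {M₂ : Type*} [AddCommGroup M₂] [Module R M₂] (φ : M →ₗ[R] M₂)
    (N : Submodule R M) : (radOp N).map φ ≤ radOp (N.map φ) := by
  rw [radOp, Submodule.map_span]
  refine Submodule.span_le.mpr ?_
  rintro _ ⟨y, ⟨a, ha, x, hx, rfl⟩, rfl⟩
  exact Submodule.subset_span ⟨a, ha, φ x, ⟨x, hx, rfl⟩, (map_smul φ a x).symm⟩

lemma nak_span :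
    ∀ s : Finset M, Submodule.span R (s : Set M) ≤ radOp (Submodule.span R (s : Set M)) →
      Submodule.span R (s : Set M) = ⊥ := by
  classical
  intro s
  induction s using Finset.strongInduction with
  | _ s ih =>
    rcases s.eq_empty_or_nonempty with rfl | ⟨x, hx⟩
    · intro _; simp
    · intro hle
      set J := Ideal.jacobson (⊥ : Ideal R) with hJ
      set Tf : M → Submodule R M :=
        fun z => Submodule.map (LinearMap.toSpanSingleton R M z) J with hTf
      have main : ∀ n ∈ Submodule.span R (s : Set M), ∀ c ∈ J, c • n ∈ s.sup Tf := by
        intro n hn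
        induction hn using Submodule.span_induction with
        | mem z hz =>
          intro c hc
          exact (Finset.le_sup (f := Tf) hz) (Submodule.mem_map.mpr ⟨c, hc, rfl⟩)
        | zero => intro c hc; simp
        | add u v hu hv ihu ihv =>
          intro c hc; rw [smul_add]; exact add_mem (ihu c hc) (ihv c hc)
        | smul r u hu ihu =>
          intro c hc; rw [smul_smul]; exact ihu (c * r) (aux_jac_mul_right hc r)
      have hT : radOp (Submodule.span R (s : Set M)) ≤ s.sup Tf := by
        refine Submodule.span_le.mpr ?_
        rintro _ ⟨c, hc, n, hn, rfl⟩
        exact main n hn c hc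
      have hx_mem : x ∈ s.sup Tf := hT (hle (Submodule.subset_span hx))
      have hsplit : s.sup Tf = Tf x ⊔ (s.erase x).sup Tf := by
        conv_lhs => rw [← Finset.insert_erase hx]
        rw [Finset.sup_insert]
      rw [hsplit] at hx_mem
      obtain ⟨t1, ht1, t2, ht2, hsum⟩ := Submodule.mem_sup.mp hx_mem
      obtain ⟨c, hc, rfl⟩ := Submodule.mem_map.mp ht1
      have ht2' : t2 ∈ Submodule.span R ((s.erase x : Finset M) : Set M) := by
        refine (Finset.sup_le fun z hz => ?_ :
          (s.erase x).sup Tf ≤ Submodule.span R ((s.erase x : Finset M) : Set M)) ht2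
        intro y hy
        obtain ⟨d, _, rfl⟩ := Submodule.mem_map.mp hy
        exact Submodule.smul_mem _ d (Submodule.subset_span hz)
      rw [LinearMap.toSpanSingleton_apply] at hsum
      have h1c : (1 - c) • x = t2 := by
        rw [sub_smul, one_smul, sub_eq_iff_eq_add']
        exact hsum.symm
      obtain ⟨u, hu⟩ := aux_left_inv hc 1
      rw [one_mul] at hu
      have hx_in : x ∈ Submodule.span R ((s.erase x : Finset M) : Set M) := by
        have h2 : u • t2 = x := by rw [← h1c, smul_smul, hu, one_smul]
        have h3 := Submodule.smul_mem _ u ht2'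
        rwa [h2] at h3
      have hspan_eq : Submodule.span R (s : Set M)
          = Submodule.span R ((s.erase x : Finset M) : Set M) := by
        conv_lhs => rw [← Finset.insert_erase hx]
        rw [Finset.coe_insert]
        exact Submodule.span_insert_eq_span hx_in
      rw [hspan_eq]
      exact ih (s.erase x) (Finset.erase_ssubset hx) (hspan_eq ▸ hle)

/-- Nakayama's lemma for the Jacobson radical of a possibly noncommutative ring. -/
lemma nak (N : Submodule R M) (hfg : N.FG) (h : N ≤ radOp N) : N = ⊥ := by
  obtain ⟨s, hs⟩ := hfg
  rw [← hs] at h ⊢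
  exact nak_span s h

lemma radOp_iterate_antitone (m n : ℕ) (h : m ≤ n) :
    radOp^[n] (⊤ : Submodule R M) ≤ radOp^[m] (⊤ : Submodule R M) := by
  obtain ⟨p, rfl⟩ := Nat.exists_eq_add_of_le h
  induction p with
  | zero => exact le_rfl
  | succ q ihq =>
    refine le_trans ?_ (ihq (by omega))
    rw [show m + (q + 1) = (m + q) + 1 by omega, Function.iterate_succ_apply']
    exact radOp_le _

lemma exists_radOp_pow_bot [IsArtinian R M] [IsNoetherian R M] :
    ∃ n : ℕ, radOp^[n] (⊤ : Submodule R M) = ⊥ := by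
  have anti : ∀ a b : ℕ, a ≤ b →
      radOp^[b] (⊤ : Submodule R M) ≤ radOp^[a] (⊤ : Submodule R M) :=
    radOp_iterate_antitone
  let F : ℕ →o (Submodule R M)ᵒᵈ :=
    ⟨fun p => OrderDual.toDual (radOp^[p] (⊤ : Submodule R M)),
      fun a b hab => anti a b hab⟩
  obtain ⟨n, hn⟩ := IsArtinian.monotone_stabilizes (R := R) (M := M) F
  have hn' : ∀ m, n ≤ m → radOp^[n] (⊤ : Submodule R M) = radOp^[m] (⊤ : Submodule R M) :=
    fun m hm => congrArg OrderDual.ofDual (hn m hm)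
  refine ⟨n, ?_⟩
  have hstab : radOp^[n] (⊤ : Submodule R M) = radOp^[n + 1] (⊤ : Submodule R M) :=
    hn' (n + 1) (by omega)
  refine nak _ (IsNoetherian.noetherian _) ?_
  conv_lhs => rw [hstab, Function.iterate_succ_apply']

end AuxModule

/-- Every null-homotopic chain endomorphism of a bounded minimal complex of finitely
generated projective modules over a finite-dimensional algebra lies in the Jacobson
radical of the endomorphism ring of the complex; in particular it is nilpotent. -/
theorem stmt_6 (k : Type*) [Field k] (A : Type*) [Ring A] [Algebra k A]
    [FiniteDimensional k A]
    (X : CochainComplex (ModuleCat A) ℤ)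
    (hbdd : ∃ a b : ℤ, ∀ i : ℤ, (i < a ∨ b < i) → Subsingleton (X.X i))
    (hfg : ∀ i : ℤ, Module.Finite A (X.X i))
    (hproj : ∀ i : ℤ, Module.Projective A (X.X i))
    (hmin : ∀ i : ℤ, LinearMap.range (X.d i (i + 1)).hom ≤ modRad A (X.X (i + 1)))
    (f : X ⟶ X) (hf : Nonempty (Homotopy f 0)) :
    (show CategoryTheory.End X from f) ∈
        Ideal.jacobson (⊥ : Ideal (CategoryTheory.End X)) ∧
      ∃ n : ℕ, 0 < n ∧ (show CategoryTheory.End X from f) ^ n = 0 := by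
  classical
  obtain ⟨h0⟩ := hf
  have hmin' : ∀ p q : ℤ, p + 1 = q →
      LinearMap.range (X.d p q).hom ≤ radOp (⊤ : Submodule A (X.X q)) := by
    intro p q hpq
    subst hpq
    rw [← modRad_eq_radOp]
    exact hmin p
  -- the key estimate: a null-homotopic map has image in the radical
  have key : ∀ (g : X ⟶ X), Homotopy g 0 → ∀ i : ℤ,
      LinearMap.range (g.f i).hom ≤ radOp (⊤ : Submodule A (X.X i)) := by
    intro g hg i
    have comm := hg.comm i
    rw [dNext_eq hg.hom (show (ComplexShape.up ℤ).Rel i (i + 1) by simp),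
      prevD_eq hg.hom (show (ComplexShape.up ℤ).Rel (i - 1) i by simp),
      HomologicalComplex.zero_f, add_zero] at comm
    rintro y ⟨x, rfl⟩
    have hgx : g.f i x
        = hg.hom (i + 1) i (X.d i (i + 1) x) + X.d (i - 1) i (hg.hom i (i - 1) x) := by
      rw [comm]; rfl
    rw [hgx]
    refine Submodule.add_mem _ ?_ ?_
    · have hd : X.d i (i + 1) x ∈ radOp (⊤ : Submodule A (X.X (i + 1))) :=
        hmin' i (i + 1) rfl ⟨x, rfl⟩
      have h2 := Submodule.mem_map_of_mem (f := (hg.hom (i + 1) i : X.X (i + 1) ⟶ X.X i).hom) hd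
      have h3 := map_radOp (hg.hom (i + 1) i).hom (⊤ : Submodule A (X.X (i + 1))) h2
      exact radOp_mono le_top h3
    · exact hmin' (i - 1) i (by ring) ⟨hg.hom i (i - 1) x, rfl⟩
  -- powers
  have powkey : ∀ (g : X ⟶ X), (∀ i : ℤ, LinearMap.range (g.f i).hom
        ≤ radOp (⊤ : Submodule A (X.X i))) →
      ∀ (n : ℕ) (i : ℤ),
        LinearMap.range (HomologicalComplex.Hom.f ((show CategoryTheory.End X from g) ^ n) i).hom
          ≤ radOp^[n] (⊤ : Submodule A (X.X i)) := by
    intro g hg n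
    induction n with
    | zero => intro i; simp only [Function.iterate_zero, id_eq]; exact le_top
    | succ m ihm =>
      intro i
      rintro y ⟨x, rfl⟩
      have hy' : HomologicalComplex.Hom.f ((show CategoryTheory.End X from g) ^ (m + 1)) i x
          = HomologicalComplex.Hom.f ((show CategoryTheory.End X from g) ^ m) i (g.f i x) := by
        rw [pow_succ, End.mul_def, HomologicalComplex.comp_f]; rfl
      rw [hy']
      have h1 : g.f i x ∈ radOp (⊤ : Submodule A (X.X i)) := hg i ⟨x, rfl⟩
      have h2 := Submodule.mem_map_of_mem
        (f := (HomologicalComplex.Hom.f ((show CategoryTheory.End X from g) ^ m) i :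
          X.X i ⟶ X.X i).hom) h1
      have h3 := map_radOp _ _ h2
      rw [Submodule.map_top] at h3
      have h5 := radOp_mono (ihm i) h3
      rwa [← Function.iterate_succ_apply' radOp m] at h5
  -- existence of a vanishing power of the radical in each degree
  have hcomp : ∀ i : ℤ, ∃ n : ℕ, radOp^[n] (⊤ : Submodule A (X.X i)) = ⊥ := by
    intro i
    letI : Module k (X.X i) := Module.compHom _ (algebraMap k A)
    haveI : IsScalarTower k A (X.X i) :=
      ⟨fun c a m => by
        show (c • a) • m = algebraMap k A c • (a • m)
        rw [Algebra.smul_def, mul_smul]⟩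
    haveI := hfg i
    haveI : Module.Finite k (X.X i) := Module.Finite.trans A (X.X i)
    haveI : IsNoetherian k (X.X i) := IsNoetherian.iff_fg.mpr inferInstance
    haveI : IsArtinian k (X.X i) := isArtinian_of_fg_of_artinian'
    haveI : IsNoetherian A (X.X i) := isNoetherian_of_tower k inferInstance
    haveI : IsArtinian A (X.X i) := isArtinian_of_tower k inferInstance
    exact exists_radOp_pow_bot
  choose nn hnn using hcomp
  obtain ⟨a, b, hab⟩ := hbdd
  set N : ℕ := ((Finset.Icc a b).sup nn) + 1 with hNdef
  have hNpos : 0 < N := Nat.succ_pos _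
  have hbot : ∀ i : ℤ, radOp^[N] (⊤ : Submodule A (X.X i)) = ⊥ := by
    intro i
    by_cases hi : i ∈ Finset.Icc a b
    · have hle : nn i ≤ N := le_trans (Finset.le_sup hi) (Nat.le_succ _)
      exact le_bot_iff.mp ((hnn i) ▸ radOp_iterate_antitone (nn i) N hle)
    · haveI : Subsingleton (X.X i) := by
        refine hab i ?_
        rw [Finset.mem_Icc] at hi
        omega
      rw [eq_bot_iff]
      intro x _
      rw [Submodule.mem_bot]
      exact Subsingleton.elim x 0
  have nilp : ∀ (g : X ⟶ X), Homotopy g 0 → (show CategoryTheory.End X from g) ^ N = 0 := by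
    intro g hg
    have hz : ∀ i : ℤ, HomologicalComplex.Hom.f ((show CategoryTheory.End X from g) ^ N) i
        = HomologicalComplex.Hom.f (0 : X ⟶ X) i := by
      intro i
      have h := powkey g (key g hg) N i
      rw [hbot i] at h
      rw [HomologicalComplex.zero_f]
      exact ModuleCat.hom_ext (LinearMap.range_eq_bot.mp (le_bot_iff.mp h))
    exact HomologicalComplex.hom_f_injective (funext hz)
  constructor
  · rw [Ideal.mem_jacobson_iff]
    intro y
    have hyf : Homotopy ((f ≫ y : X ⟶ X)) (0 : X ⟶ X) :=
      (h0.compRight y).trans (Homotopy.ofEq (by simp))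
    have hzero : (show CategoryTheory.End X from f ≫ y) ^ N = 0 := nilp (f ≫ y) hyf
    have hnil : IsNilpotent (-(y * (show CategoryTheory.End X from f))) :=
      IsNilpotent.neg ⟨N, hzero⟩
    have hunit : IsUnit (1 + y * (show CategoryTheory.End X from f)) := by
      have h := hnil.isUnit_one_sub
      rwa [sub_neg_eq_add] at h
    obtain ⟨w, hw⟩ := hunit
    refine ⟨((w⁻¹ : (CategoryTheory.End X)ˣ) : CategoryTheory.End X), ?_⟩
    rw [Submodule.mem_bot]
    have h1 : ((w⁻¹ : (CategoryTheory.End X)ˣ) : CategoryTheory.End X)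
        * (1 + y * (show CategoryTheory.End X from f)) = 1 := by
      rw [← hw]; exact w.inv_mul
    have expand : ((w⁻¹ : (CategoryTheory.End X)ˣ) : CategoryTheory.End X) * y
            * (show CategoryTheory.End X from f)
          + ((w⁻¹ : (CategoryTheory.End X)ˣ) : CategoryTheory.End X) - 1
        = ((w⁻¹ : (CategoryTheory.End X)ˣ) : CategoryTheory.End X)
            * (1 + y * (show CategoryTheory.End X from f)) - 1 := by
      noncomm_ring
    rw [expand, h1, sub_self]
  · exact ⟨N, hNpos, nilp f h0⟩
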